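/- arXiv:1110.1066 — 7 statements merged into one kernel-verified Lean document; each statement's English description precedes it below -/
import Mathlib

section
/- All idempotents in a Reedy category are split: if ε: c → c satisfies εε = ε, then there exist σ: d → c in C⁺ and ρ: c → d in C⁻ with ρσ = 1_d and σρ = ε. -/
open CategoryTheory CategoryTheory.Limits Opposite

universe v u

/-- A Reedy category structure on a category `C`: wide subcategories `plus` (direct) and
`minus` (inverse) together with a degree function, satisfying unique factorization and
the degree conditions. -/
structure ReedyStruct (C : Type u) [Category.{v} C] where
  plus : MorphismProperty C
  minus : MorphismProperty C
  deg : C → ℕ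
  plus_id : ∀ c : C, plus (𝟙 c)
  minus_id : ∀ c : C, minus (𝟙 c)
  plus_comp : ∀ {a b c : C} (f : a ⟶ b) (g : b ⟶ c), plus f → plus g → plus (f ≫ g)
  minus_comp : ∀ {a b c : C} (f : a ⟶ b) (g : b ⟶ c), minus f → minus g → minus (f ≫ g)
  fact_exists : ∀ {a b : C} (f : a ⟶ b), ∃ (e : C) (g : a ⟶ e) (h : e ⟶ b),
    minus g ∧ plus h ∧ g ≫ h = f
  fact_unique : ∀ {a b e e' : C} (g : a ⟶ e) (h : e ⟶ b) (g' : a ⟶ e') (h' : e' ⟶ b),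
    minus g → plus h → minus g' → plus h' → g ≫ h = g' ≫ h' →
    ∃ w : e = e', g ≫ eqToHom w = g' ∧ eqToHom w ≫ h' = h
  plus_deg : ∀ {a b : C} (f : a ⟶ b), plus f → deg a ≤ deg b
  minus_deg : ∀ {a b : C} (f : a ⟶ b), minus f → deg b ≤ deg a
  plus_deg_eq : ∀ {a b : C} (f : a ⟶ b), plus f → deg a = deg b → ∃ w : a = b, f = eqToHom w
  minus_deg_eq : ∀ {a b : C} (f : a ⟶ b), minus f → deg a = deg b → ∃ w : a = b, f = eqToHom w

/-- All idempotents in a Reedy category are split: if `ε : c ⟶ c` satisfies `ε ≫ ε = ε`, then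
there exist `ρ : c ⟶ d` in `C⁻` and `σ : d ⟶ c` in `C⁺` with `σ ≫ ρ = 𝟙 d` (i.e. `ρσ = 1_d`)
and `ρ ≫ σ = ε` (i.e. `σρ = ε`). -/
theorem reedy_idempotents_split {C : Type u} [Category.{v} C] (R : ReedyStruct C)
    {c : C} (ε : c ⟶ c) (hε : ε ≫ ε = ε) :
    ∃ (d : C) (ρ : c ⟶ d) (σ : d ⟶ c),
      R.minus ρ ∧ R.plus σ ∧ σ ≫ ρ = 𝟙 d ∧ ρ ≫ σ = ε := by
  obtain ⟨d, ρ, σ, hρ, hσ, hfac⟩ := R.fact_exists ε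
  -- factor σ ≫ ρ
  obtain ⟨e, ρ', σ', hρ', hσ', hfac'⟩ := R.fact_exists (σ ≫ ρ)
  have key : (ρ ≫ ρ') ≫ (σ' ≫ σ) = ρ ≫ σ := by
    calc (ρ ≫ ρ') ≫ (σ' ≫ σ) = ρ ≫ (ρ' ≫ σ') ≫ σ := by simp
    _ = ρ ≫ (σ ≫ ρ) ≫ σ := by rw [hfac']
    _ = (ρ ≫ σ) ≫ (ρ ≫ σ) := by simp
    _ = ρ ≫ σ := by rw [hfac, hε]
  obtain ⟨w, hw1, hw2⟩ := R.fact_unique (ρ ≫ ρ') (σ' ≫ σ) ρ σ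
    (R.minus_comp _ _ hρ hρ') (R.plus_comp _ _ hσ' hσ) hρ hσ key
  have hdeg : R.deg d = R.deg e := by rw [w]
  obtain ⟨w', hρ'eq⟩ := R.minus_deg_eq ρ' hρ' hdeg
  obtain ⟨w'', hσ'eq⟩ := R.plus_deg_eq σ' hσ' hdeg.symm
  have hid : σ ≫ ρ = 𝟙 d := by
    rw [← hfac', hρ'eq, hσ'eq]
    simp
  exact ⟨d, ρ, σ, hρ, hσ, hid, hfac⟩
end

section
/- In a Reedy category, every retract of a representable presheaf is representable: if X is a retract of Fc in Psh(C), then X ≅ Fd for some object d of C. -/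
open CategoryTheory CategoryTheory.Limits Opposite

universe v u

/-- Idempotents split in a Reedy category. -/
theorem ReedyStruct.idem_split {C : Type u} [Category.{v} C] (R : ReedyStruct C)
    {c : C} (e : c ⟶ c) (he : e ≫ e = e) :
    ∃ (d : C) (g : c ⟶ d) (h : d ⟶ c), g ≫ h = e ∧ h ≫ g = 𝟙 d := by
  obtain ⟨d, g, h, hg, hh, hgh⟩ := R.fact_exists e
  obtain ⟨d', g', h', hg', hh', hgh'⟩ := R.fact_exists (h ≫ g)
  have key : (g ≫ g') ≫ (h' ≫ h) = g ≫ h := by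
    calc (g ≫ g') ≫ h' ≫ h = g ≫ (g' ≫ h') ≫ h := by simp
      _ = g ≫ (h ≫ g) ≫ h := by rw [hgh']
      _ = (g ≫ h) ≫ g ≫ h := by simp
      _ = e ≫ e := by rw [hgh]
      _ = g ≫ h := by rw [he, hgh]
  obtain ⟨w, hw1, hw2⟩ := R.fact_unique (g ≫ g') (h' ≫ h) g h
    (R.minus_comp _ _ hg hg') (R.plus_comp _ _ hh' hh) hg hh key
  subst w
  obtain ⟨w1, hg'eq⟩ := R.minus_deg_eq g' hg' rfl
  obtain ⟨w2, hh'eq⟩ := R.plus_deg_eq h' hh' rfl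
  refine ⟨_, g, h, hgh, ?_⟩
  rw [← hgh', hg'eq, hh'eq]
  simp

/-- In a Reedy category, every retract of a representable presheaf is representable:
if `X` is a retract of `Fc` in `Psh(C)`, then `X ≅ Fd` for some object `d` of `C`. -/
theorem reedy_retract_of_representable {C : Type u} [Category.{v} C] (R : ReedyStruct C)
    (c : C) (X : Cᵒᵖ ⥤ Type v) (i : X ⟶ yoneda.obj c) (r : yoneda.obj c ⟶ X)
    (hri : i ≫ r = 𝟙 X) : ∃ d : C, Nonempty (X ≅ yoneda.obj d) := by
  set e : c ⟶ c := yoneda.preimage (r ≫ i) with he_def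
  have hmap : yoneda.map e = r ≫ i := yoneda.map_preimage _
  have he : e ≫ e = e := by
    apply yoneda.map_injective
    rw [yoneda.map_comp, hmap]
    rw [Category.assoc, ← Category.assoc i r, hri, Category.id_comp]
  obtain ⟨d, g, h, hgh, hhg⟩ := R.idem_split e he
  refine ⟨d, ⟨⟨i ≫ yoneda.map g, yoneda.map h ≫ r, ?_, ?_⟩⟩⟩
  · -- (i ≫ yoneda.map g) ≫ (yoneda.map h ≫ r) = 𝟙 X
    have : yoneda.map g ≫ yoneda.map h = r ≫ i := by rw [← yoneda.map_comp, hgh, hmap]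
    calc (i ≫ yoneda.map g) ≫ yoneda.map h ≫ r
        = i ≫ (yoneda.map g ≫ yoneda.map h) ≫ r := by simp [Category.assoc]
      _ = (i ≫ r) ≫ (i ≫ r) := by rw [this]; simp [Category.assoc]
      _ = 𝟙 X := by rw [hri]; simp
  · -- (yoneda.map h ≫ r) ≫ (i ≫ yoneda.map g) = 𝟙 (yoneda.obj d)
    calc (yoneda.map h ≫ r) ≫ i ≫ yoneda.map g
        = yoneda.map h ≫ (r ≫ i) ≫ yoneda.map g := by simp [Category.assoc]
      _ = yoneda.map (h ≫ (e ≫ g)) := by rw [← hmap]; simp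
      _ = 𝟙 (yoneda.obj d) := by
          rw [← hgh]
          rw [show h ≫ (g ≫ h) ≫ g = (h ≫ g) ≫ (h ≫ g) by simp [Category.assoc], hhg]
          simp
end

section
/- Every multi-Reedy category is a Reedy category, with inverse category C⁻, direct category C⁺ = C⁺(*) ∩ C, and the same degree function. -/
open CategoryTheory CategoryTheory.Limits Opposite

universe v u

/-- A multi-Reedy category structure on `C`: a wide subcategory `minus`, a wide
sub-multicategory `plusM` of the symmetric multicategory `C(*)` (whose multimorphisms
`c → d₁,…,dₘ` are finite tuples of morphisms `c ⟶ dᵢ` of `C`), and a degree function,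
satisfying unique factorization of multimorphisms as a map of `minus` followed by a
multimorphism of `plusM`, together with the degree conditions. -/
structure MultiReedyStruct (C : Type u) [Category.{v} C] where
  minus : MorphismProperty C
  plusM : ∀ {c : C} {ι : Type} [Fintype ι] (d : ι → C), (∀ i, c ⟶ d i) → Prop
  deg : C → ℕ
  minus_id : ∀ c : C, minus (𝟙 c)
  minus_comp : ∀ {a b c : C} (f : a ⟶ b) (g : b ⟶ c), minus f → minus g → minus (f ≫ g)
  plusM_id : ∀ c : C, plusM (fun _ : PUnit => c) (fun _ => 𝟙 c)
  plusM_reindex : ∀ {c : C} {ι ι' : Type} [Fintype ι] [Fintype ι'] (e : ι' ≃ ι)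
    (d : ι → C) (f : ∀ i, c ⟶ d i), plusM d f → plusM (fun i => d (e i)) (fun i => f (e i))
  plusM_comp : ∀ {c : C} {ι : Type} [Fintype ι] {d : ι → C} (f : ∀ i, c ⟶ d i)
    {κ : ι → Type} [∀ i, Fintype (κ i)] {e : ∀ i, κ i → C} (g : ∀ i j, d i ⟶ e i j),
    plusM d f → (∀ i, plusM (e i) (g i)) →
    plusM (ι := Σ i, κ i) (fun p => e p.1 p.2) (fun p => f p.1 ≫ g p.1 p.2)
  fact_exists : ∀ {c : C} {ι : Type} [Fintype ι] (d : ι → C) (f : ∀ i, c ⟶ d i),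
    ∃ (x : C) (g : c ⟶ x) (h : ∀ i, x ⟶ d i), minus g ∧ plusM d h ∧ ∀ i, g ≫ h i = f i
  fact_unique : ∀ {c : C} {ι : Type} [Fintype ι] (d : ι → C) {x x' : C}
    (g : c ⟶ x) (h : ∀ i, x ⟶ d i) (g' : c ⟶ x') (h' : ∀ i, x' ⟶ d i),
    minus g → plusM d h → minus g' → plusM d h' → (∀ i, g ≫ h i = g' ≫ h' i) →
    ∃ w : x = x', g ≫ eqToHom w = g' ∧ ∀ i, eqToHom w ≫ h' i = h i
  plusM_deg : ∀ {c : C} {ι : Type} [Fintype ι] (d : ι → C) (f : ∀ i, c ⟶ d i),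
    plusM d f → deg c ≤ ∑ i, deg (d i)
  plusOne_deg_eq : ∀ {a b : C} (f : a ⟶ b),
    plusM (fun _ : PUnit => b) (fun _ => f) → deg a = deg b → ∃ w : a = b, f = eqToHom w
  minus_deg : ∀ {a b : C} (f : a ⟶ b), minus f → deg b ≤ deg a
  minus_deg_eq : ∀ {a b : C} (f : a ⟶ b), minus f → deg a = deg b → ∃ w : a = b, f = eqToHom w

/-- The direct subcategory `C⁺ = C⁺(*) ∩ C` of a multi-Reedy category: the valence-one
multimorphisms of `C⁺(*)`. -/
def MultiReedyStruct.plusOne {C : Type u} [Category.{v} C] (M : MultiReedyStruct C) :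
    MorphismProperty C :=
  fun _ b f => M.plusM (fun _ : PUnit => b) (fun _ => f)

/-- Every multi-Reedy category is a Reedy category, with inverse category `C⁻`, direct
category `C⁺ = C⁺(*) ∩ C`, and the same degree function. -/
theorem multiReedy_is_reedy {C : Type u} [Category.{v} C] (M : MultiReedyStruct C) :
    ∃ R : ReedyStruct C, R.minus = M.minus ∧ R.plus = M.plusOne ∧ R.deg = M.deg := by
  refine ⟨{
    plus := M.plusOne
    minus := M.minus
    deg := M.deg
    plus_id := M.plusM_id
    minus_id := M.minus_id
    plus_comp := ?_
    minus_comp := fun f g hf hg => M.minus_comp f g hf hg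
    fact_exists := ?_
    fact_unique := ?_
    plus_deg := ?_
    minus_deg := fun f hf => M.minus_deg f hf
    plus_deg_eq := fun f hf => M.plusOne_deg_eq f hf
    minus_deg_eq := fun f hf => M.minus_deg_eq f hf }, rfl, rfl, rfl⟩
  · intro a b c f g hf hg
    have := M.plusM_comp (ι := PUnit) (d := fun _ => b) (fun _ => f)
      (κ := fun _ => PUnit) (e := fun _ _ => c) (fun _ _ => g) hf (fun _ => hg)
    have := M.plusM_reindex (Equiv.punitProd PUnit |>.symm.trans (Equiv.prodComm _ _)
      |>.trans (Equiv.sigmaEquivProd PUnit PUnit).symm) _ _ this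
    exact this
  · intro a b f
    obtain ⟨x, g, h, hg, hh, hc⟩ := M.fact_exists (ι := PUnit) (fun _ => b) (fun _ => f)
    refine ⟨x, g, h PUnit.unit, hg, ?_, hc PUnit.unit⟩
    have : (fun _ : PUnit => h PUnit.unit) = h := by funext i; cases i; rfl
    exact this ▸ hh
  · intro a b e e' g h g' h' hg hh hg' hh' heq
    obtain ⟨w, h1, h2⟩ := M.fact_unique (ι := PUnit) (fun _ => b) g (fun _ => h) g'
      (fun _ => h') hg hh hg' hh' (fun _ => heq)
    exact ⟨w, h1, h2 PUnit.unit⟩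
  · intro a b f hf
    have := M.plusM_deg (ι := PUnit) (fun _ => b) (fun _ => f) hf
    simpa using this
end

section
/- The category Δ with Δ⁻ the surjections, Δ⁺(*) the monomorphic families of maps (tuples (αₛ: [m] → [nₛ]) such that αₛβ = αₛβ' for all s implies β = β'), and deg([m]) = m, is a multi-Reedy category. -/
open CategoryTheory CategoryTheory.Limits Opposite

universe v u

namespace SimplexMR

open SimplexCategory

/-- Jointly monomorphic families in `Δ`. -/
def jm {a : SimplexCategory} {ι : Type} [Fintype ι] (d : ι → SimplexCategory)
    (f : ∀ i, a ⟶ d i) : Prop :=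
  ∀ {k : SimplexCategory} (β β' : k ⟶ a), (∀ i, β ≫ f i = β' ≫ f i) → β = β'

lemma jm_iff {a : SimplexCategory} {ι : Type} [Fintype ι] (d : ι → SimplexCategory)
    (f : ∀ i, a ⟶ d i) :
    jm d f ↔ Function.Injective (fun x : Fin (a.len + 1) => fun i => (f i).toOrderHom x) := by
  constructor
  · intro h x y hxy
    have h2 := h (SimplexCategory.const (SimplexCategory.mk 0) a x)
      (SimplexCategory.const (SimplexCategory.mk 0) a y) (fun i => by
        rw [SimplexCategory.const_comp, SimplexCategory.const_comp]
        congr 1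
        exact congrFun hxy i)
    have h3 := congrArg (fun γ : SimplexCategory.mk 0 ⟶ a => γ.toOrderHom 0) h2
    simpa using h3
  · intro h k β β' hc
    apply SimplexCategory.Hom.ext'
    apply OrderHom.ext
    funext x
    apply h
    funext i
    have h4 := congrArg (fun γ : k ⟶ d i => γ.toOrderHom x) (hc i)
    simpa [SimplexCategory.comp_toOrderHom] using h4

lemma jm_injective {a b : SimplexCategory} (f : a ⟶ b)
    (hf : jm (fun _ : PUnit => b) (fun _ => f)) : Function.Injective f.toOrderHom := by
  intro u v huv
  exact (jm_iff _ _).1 hf (funext fun _ => huv)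

/-- The multi-Reedy structure on `Δ`. -/
noncomputable def M : MultiReedyStruct SimplexCategory where
  minus := fun _ _ f => Function.Surjective f.toOrderHom
  plusM := fun {c ι} _ d f => jm d f
  deg := SimplexCategory.len
  minus_id := fun c x => ⟨x, rfl⟩
  minus_comp := by
    intro a b c f g hf hg
    intro y
    obtain ⟨z, hz⟩ := hg y
    obtain ⟨u, hu⟩ := hf z
    exact ⟨u, by simp [SimplexCategory.comp_toOrderHom, hu, hz]⟩
  plusM_id := by
    intro c k β β' h
    simpa using h PUnit.unit
  plusM_reindex := by
    intro c ι ι' _ _ e d f hf k β β' h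
    apply hf β β'
    intro i
    obtain ⟨i', rfl⟩ : ∃ i', e i' = i := ⟨e.symm i, e.apply_symm_apply i⟩
    exact h i'
  plusM_comp := by
    intro c ι _ d f κ _ e g hf hg k β β' h
    apply hf β β'
    intro i
    apply hg i (β ≫ f i) (β' ≫ f i)
    intro j
    simpa [Category.assoc] using h ⟨i, j⟩
  fact_exists := by
    intro c ι _ d f
    classical
    set F : Fin (c.len + 1) → ∀ i, Fin ((d i).len + 1) := fun x i => (f i).toOrderHom x with hF
    have hFmono : Monotone F := fun x y hxy i => (f i).toOrderHom.monotone hxy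
    set S := Set.range F with hS
    letI : LinearOrder S :=
      { (inferInstance : PartialOrder S) with
        le_total := by
          rintro ⟨_, x, rfl⟩ ⟨_, y, rfl⟩
          rcases le_total x y with h | h
          · exact Or.inl (hFmono h)
          · exact Or.inr (hFmono h)
        toDecidableLE := Classical.decRel _ }
    have hScard : Fintype.card S = (Fintype.card S - 1) + 1 := by
      have : 0 < Fintype.card S := Fintype.card_pos_iff.2 ⟨⟨F 0, 0, rfl⟩⟩
      omega
    let e := monoEquivOfFin S hScard
    refine ⟨SimplexCategory.mk (Fintype.card S - 1),
      SimplexCategory.Hom.mk ⟨fun u => e.symm ⟨F u, u, rfl⟩, fun u v huv =>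
        e.symm.monotone (show (⟨F u, u, rfl⟩ : S) ≤ ⟨F v, v, rfl⟩ from hFmono huv)⟩,
      fun i => SimplexCategory.Hom.mk ⟨fun z => (e z).val i, fun z w hzw =>
        (show (e z).val ≤ (e w).val from e.monotone hzw) i⟩, ?_, ?_, ?_⟩
    · -- surjectivity
      intro z
      obtain ⟨u, hu⟩ := (e z).2
      refine ⟨u, ?_⟩
      show e.symm ⟨F u, u, rfl⟩ = z
      have : (⟨F u, u, rfl⟩ : S) = e z := Subtype.ext hu
      rw [this, e.symm_apply_apply]
    · -- jointly mono
      refine (jm_iff _ _).2 ?_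
      intro z w hzw
      apply e.injective
      apply Subtype.ext
      funext i
      exact congrFun hzw i
    · intro i
      apply SimplexCategory.Hom.ext'
      apply OrderHom.ext
      funext u
      show (e (e.symm ⟨F u, u, rfl⟩)).val i = (f i).toOrderHom u
      rw [e.apply_symm_apply]
  fact_unique := by
    intro c ι _ d x x' g h g' h' hg hh hg' hh' hcomm
    classical
    have Hinj' := (jm_iff d h').1 hh'
    have Hinj := (jm_iff d h).1 hh
    have hpt : ∀ u i, (h i).toOrderHom (g.toOrderHom u) = (h' i).toOrderHom (g'.toOrderHom u) := by
      intro u i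
      have := congrArg (fun γ : c ⟶ d i => γ.toOrderHom u) (hcomm i)
      simpa [SimplexCategory.comp_toOrderHom] using this
    have key : ∀ u v, g.toOrderHom u = g.toOrderHom v → g'.toOrderHom u = g'.toOrderHom v := by
      intro u v huv
      apply Hinj'
      funext i
      show (h' i).toOrderHom _ = (h' i).toOrderHom _
      rw [← hpt u i, ← hpt v i, huv]
    have key' : ∀ u v, g'.toOrderHom u = g'.toOrderHom v → g.toOrderHom u = g.toOrderHom v := by
      intro u v huv
      apply Hinj
      funext i
      show (h i).toOrderHom _ = (h i).toOrderHom _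
      rw [hpt u i, hpt v i, huv]
    have hgsurj : Function.Surjective g.toOrderHom := hg
    have hg'surj : Function.Surjective g'.toOrderHom := hg'
    choose sec hsec using hgsurj
    choose sec' hsec' using hg'surj
    let φ : Fin (x.len + 1) → Fin (x'.len + 1) := fun z => g'.toOrderHom (sec z)
    let ψ : Fin (x'.len + 1) → Fin (x.len + 1) := fun z => g.toOrderHom (sec' z)
    have hφg : ∀ u, φ (g.toOrderHom u) = g'.toOrderHom u := fun u => key _ _ (hsec _)
    have hψg' : ∀ u, ψ (g'.toOrderHom u) = g.toOrderHom u := fun u => key' _ _ (hsec' _)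
    have hli : Function.LeftInverse ψ φ := by
      intro z
      obtain ⟨u, rfl⟩ : ∃ u, g.toOrderHom u = z := ⟨sec z, hsec z⟩
      rw [hφg, hψg']
    have hri : Function.RightInverse ψ φ := by
      intro z
      obtain ⟨u, rfl⟩ : ∃ u, g'.toOrderHom u = z := ⟨sec' z, hsec' z⟩
      rw [hψg', hφg]
    have hφbij : Function.Bijective φ := ⟨hli.injective, hri.surjective⟩
    have hcard : x.len + 1 = x'.len + 1 := by
      have := Fintype.card_of_bijective hφbij
      simpa using this
    obtain rfl : x = x' := SimplexCategory.ext (by omega)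
    have hφmono : Monotone φ := by
      intro z w hzw
      obtain ⟨u, rfl⟩ : ∃ u, g.toOrderHom u = z := ⟨sec z, hsec z⟩
      obtain ⟨v, rfl⟩ : ∃ v, g.toOrderHom v = w := ⟨sec w, hsec w⟩
      rcases le_or_gt u v with huv | hvu
      · rw [hφg, hφg]
        exact g'.toOrderHom.monotone huv
      · have h1 : g.toOrderHom v ≤ g.toOrderHom u := g.toOrderHom.monotone hvu.le
        have h2 : g.toOrderHom u = g.toOrderHom v := le_antisymm hzw h1
        rw [h2]
    let φhom : x ⟶ x := SimplexCategory.Hom.mk ⟨φ, hφmono⟩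
    haveI : Mono φhom := SimplexCategory.mono_iff_injective.2 hφbij.1
    have hφid : φhom = 𝟙 x := SimplexCategory.eq_id_of_mono φhom
    have hφid' : ∀ z, φ z = z := by
      intro z
      have := congrArg (fun γ : x ⟶ x => γ.toOrderHom z) hφid
      exact (by simpa using this : φhom.toOrderHom z = z)
    refine ⟨rfl, ?_, ?_⟩
    · rw [eqToHom_refl, Category.comp_id]
      apply SimplexCategory.Hom.ext'
      apply OrderHom.ext
      funext u
      show g.toOrderHom u = g'.toOrderHom u
      rw [← hφg u, hφid']
    · intro i
      rw [eqToHom_refl, Category.id_comp]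
      apply SimplexCategory.Hom.ext'
      apply OrderHom.ext
      funext z
      show (h' i).toOrderHom z = (h i).toOrderHom z
      conv_rhs => rw [← hsec z]
      rw [hpt (sec z) i]
      show (h' i).toOrderHom z = (h' i).toOrderHom (φ z)
      rw [hφid']
  plusM_deg := by
    intro c ι _ d f hf
    have Hinj := (jm_iff d f).1 hf
    set s : Fin (c.len + 1) → ℕ := fun u => ∑ i, ((f i).toOrderHom u : ℕ) with hs
    have hmono : StrictMono s := by
      intro u v huv
      apply Finset.sum_lt_sum
      · intro i _
        exact_mod_cast (f i).toOrderHom.monotone huv.le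
      · by_contra hcon
        push_neg at hcon
        have heq : ∀ i, (f i).toOrderHom u = (f i).toOrderHom v := by
          intro i
          have h1 : ((f i).toOrderHom v : ℕ) ≤ ((f i).toOrderHom u : ℕ) :=
            hcon i (Finset.mem_univ i)
          have h2 : ((f i).toOrderHom u : ℕ) ≤ ((f i).toOrderHom v : ℕ) := by
            exact_mod_cast (f i).toOrderHom.monotone huv.le
          exact Fin.ext (le_antisymm h2 h1)
        exact absurd (Hinj (funext heq)) huv.ne
    have hstep : ∀ n : ℕ, ∀ hn : n < c.len + 1, n ≤ s ⟨n, hn⟩ := by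
      intro n
      induction n with
      | zero => intro hn; exact Nat.zero_le _
      | succ k ih =>
        intro hn
        have h1 : k < c.len + 1 := by omega
        have h2 := hmono (show (⟨k, h1⟩ : Fin (c.len + 1)) < ⟨k + 1, hn⟩ by
          simp [Fin.lt_def])
        have h3 := ih h1
        omega
    have hlast : s ⟨c.len, Nat.lt_succ_self _⟩ ≤ ∑ i, (d i).len := by
      apply Finset.sum_le_sum
      intro i _
      exact Nat.lt_succ_iff.1 ((f i).toOrderHom _).2
    have := hstep c.len (Nat.lt_succ_self _)
    show c.len ≤ ∑ i, (d i).len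
    omega
  plusOne_deg_eq := by
    intro a b f hf hd
    obtain rfl : a = b := SimplexCategory.ext hd
    refine ⟨rfl, ?_⟩
    haveI : Mono f := SimplexCategory.mono_iff_injective.2 (jm_injective f hf)
    rw [eqToHom_refl]
    exact SimplexCategory.eq_id_of_mono f
  minus_deg := by
    intro a b f hf
    have := Fintype.card_le_of_surjective _ hf
    simp only [Fintype.card_fin] at this
    show b.len ≤ a.len
    omega
  minus_deg_eq := by
    intro a b f hf hd
    obtain rfl : a = b := SimplexCategory.ext hd
    refine ⟨rfl, ?_⟩
    haveI : Epi f := SimplexCategory.epi_iff_surjective.2 hf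
    rw [eqToHom_refl]
    exact SimplexCategory.eq_id_of_epi f

end SimplexMR

/-- The simplex category `Δ`, with `Δ⁻` the surjections, `Δ⁺(*)` the monomorphic families
(tuples `(αₛ : [m] ⟶ [nₛ])` such that `αₛ ∘ β = αₛ ∘ β'` for all `s` implies `β = β'`),
and `deg [m] = m`, is a multi-Reedy category. -/
theorem simplexCategory_multiReedy :
    ∃ M : MultiReedyStruct SimplexCategory,
      (∀ x : SimplexCategory, M.deg x = x.len) ∧
      (∀ {a b : SimplexCategory} (f : a ⟶ b),
        M.minus f ↔ Function.Surjective f.toOrderHom) ∧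
      (∀ {a : SimplexCategory} {ι : Type} [Fintype ι] (d : ι → SimplexCategory)
        (f : ∀ i, a ⟶ d i),
        M.plusM d f ↔
          ∀ {k : SimplexCategory} (β β' : k ⟶ a), (∀ i, β ≫ f i = β' ≫ f i) → β = β') :=
  ⟨SimplexMR.M, fun _ => rfl, fun _ => Iff.rfl, fun _ _ => Iff.rfl⟩
end

section
/- A Reedy category C is elegant if and only if it satisfies property (SP): every pair of maps σ₁: c → d₁, σ₂: c → d₂ in C⁻ extends to a commutative square τ₁σ₁ = τ₂σ₂ with τₛ: dₛ → e in C⁻ whose image under the Yoneda embedding is a pushout square in Psh(C). -/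
open CategoryTheory CategoryTheory.Limits Opposite

universe v u

variable {C : Type} [SmallCategory C]

/-- A `c`-point `x ∈ X(c)` of a presheaf is degenerate if it is the image of some point
under a non-identity map of `C⁻`. -/
def Degenerate (R : ReedyStruct C) (X : Cᵒᵖ ⥤ Type) {c : C} (x : X.obj (op c)) : Prop :=
  ∃ (d : C) (σ : c ⟶ d) (y : X.obj (op d)),
    R.minus σ ∧ (¬ ∃ w : c = d, σ = eqToHom w) ∧ X.map σ.op y = x

/-- A Reedy category is elegant if every point of every presheaf is uniquely a degeneracy
of a unique non-degenerate point. -/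
def Elegant (R : ReedyStruct C) : Prop :=
  ∀ (X : Cᵒᵖ ⥤ Type) (c : C) (x : X.obj (op c)),
    ∃! p : Σ d : C, (c ⟶ d) × X.obj (op d),
      R.minus p.2.1 ∧ ¬ Degenerate R X p.2.2 ∧ X.map p.2.1.op p.2.2 = x

/-- Property (SP): every pair of maps in `C⁻` with common source extends to a commutative
square in `C⁻` whose image under the Yoneda embedding is a pushout square of presheaves. -/
def StrongPushoutProp (R : ReedyStruct C) : Prop :=
  ∀ {c d₁ d₂ : C} (σ₁ : c ⟶ d₁) (σ₂ : c ⟶ d₂), R.minus σ₁ → R.minus σ₂ →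
    ∃ (e : C) (τ₁ : d₁ ⟶ e) (τ₂ : d₂ ⟶ e), R.minus τ₁ ∧ R.minus τ₂ ∧
      σ₁ ≫ τ₁ = σ₂ ≫ τ₂ ∧
      IsPushout (yoneda.map σ₁) (yoneda.map σ₂) (yoneda.map τ₁) (yoneda.map τ₂)

/-! ### Auxiliary material -/

section Aux

/-- A map in `C⁻` which is not an identity strictly decreases degree. -/
lemma minus_deg_lt (R : ReedyStruct C) {c d : C} (σ : c ⟶ d) (hm : R.minus σ)
    (hne : ¬ ∃ w : c = d, σ = eqToHom w) : R.deg d < R.deg c := by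
  rcases lt_or_eq_of_le (R.minus_deg σ hm) with h | h
  · exact h
  · exact absurd (R.minus_deg_eq σ hm h.symm) hne

/-- Existence of a non-degenerate decomposition, by induction on degree. -/
lemma exists_nondeg (R : ReedyStruct C) (X : Cᵒᵖ ⥤ Type) :
    ∀ (n : ℕ) (c : C), R.deg c < n → ∀ x : X.obj (op c),
      ∃ p : Σ d : C, (c ⟶ d) × X.obj (op d),
        R.minus p.2.1 ∧ ¬ Degenerate R X p.2.2 ∧ X.map p.2.1.op p.2.2 = x := by
  intro n
  induction n with
  | zero => intro c h; omega
  | succ n ih =>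
    intro c hc x
    by_cases hx : Degenerate R X x
    · obtain ⟨d, σ, y, hm, hne, hxy⟩ := hx
      have hd : R.deg d < n :=
        lt_of_lt_of_le (minus_deg_lt R σ hm hne) (Nat.lt_succ_iff.mp hc)
      obtain ⟨⟨d', σ', y'⟩, hm', hnd', hy'⟩ := ih d hd y
      refine ⟨⟨d', σ ≫ σ', y'⟩, R.minus_comp _ _ hm hm', hnd', ?_⟩
      rw [op_comp, X.map_comp]
      simp only [types_comp_apply]
      rw [hy', hxy]
    · exact ⟨⟨c, 𝟙 c, x⟩, R.minus_id c, hx, by simp⟩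

/-- The natural transformation `yoneda.obj d ⟶ X` classified by an element of `X(d)`. -/
def yElt (X : Cᵒᵖ ⥤ Type) {d : C} (y : X.obj (op d)) : yoneda.obj d ⟶ X where
  app a := TypeCat.ofHom (fun f => X.map f.op y)
  naturality a b h := by
    ext f
    dsimp [yoneda]
    rw [← FunctorToTypes.map_comp_apply]

/-- Yoneda-style computation: a map out of a representable is determined by its value
at the identity. -/
lemma yoneda_app {F : Cᵒᵖ ⥤ Type} {d : C} (η : yoneda.obj d ⟶ F) (a : Cᵒᵖ)
    (f : unop a ⟶ d) : η.app a f = F.map f.op (η.app (op d) (𝟙 d)) := by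
  have := types_congr_hom (η.naturality f.op) (𝟙 d)
  simp only [types_comp_apply] at this
  dsimp [yoneda] at this
  rw [← this, Category.comp_id]

section ExplicitPushout

variable {c d₁ d₂ : C} (σ₁ : c ⟶ d₁) (σ₂ : c ⟶ d₂)

/-- The generating relation of the pushout presheaf of `y(d₁) ← y(c) → y(d₂)`. -/
inductive PRel (a : Cᵒᵖ) :
    ((unop a ⟶ d₁) ⊕ (unop a ⟶ d₂)) → ((unop a ⟶ d₁) ⊕ (unop a ⟶ d₂)) → Prop
  | mk (g : unop a ⟶ c) : PRel a (Sum.inl (g ≫ σ₁)) (Sum.inr (g ≫ σ₂))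

/-- The explicit pushout presheaf of `y(d₁) ← y(c) → y(d₂)`. -/
def PSh : Cᵒᵖ ⥤ Type where
  obj a := Quot (PRel σ₁ σ₂ a)
  map {a b} h := TypeCat.ofHom (Quot.map (Sum.map (fun f => h.unop ≫ f) (fun f => h.unop ≫ f))
    (by
      rintro _ _ ⟨g⟩
      have := PRel.mk (σ₁ := σ₁) (σ₂ := σ₂) (a := b) (h.unop ≫ g)
      simpa [Sum.map, Category.assoc] using this))
  map_id a := by
    ext t
    induction t using Quot.ind with
    | _ s => cases s <;> simp [Quot.map]
  map_comp {a b e} h h' := by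
    ext t
    induction t using Quot.ind with
    | _ s => cases s <;> simp [Quot.map]

/-- The canonical element of `P(d₁)`. -/
def pElem₁ : (PSh σ₁ σ₂).obj (op d₁) := Quot.mk _ (Sum.inl (𝟙 d₁))

/-- The canonical element of `P(d₂)`. -/
def pElem₂ : (PSh σ₁ σ₂).obj (op d₂) := Quot.mk _ (Sum.inr (𝟙 d₂))

lemma PSh_map_inl {a : C} (f : a ⟶ d₁) (g : d₁ ⟶ d₁) :
    (PSh σ₁ σ₂).map f.op (Quot.mk _ (Sum.inl g)) = Quot.mk _ (Sum.inl (f ≫ g)) := rfl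

lemma PSh_map_inr {a : C} (f : a ⟶ d₂) (g : d₂ ⟶ d₂) :
    (PSh σ₁ σ₂).map f.op (Quot.mk _ (Sum.inr g)) = Quot.mk _ (Sum.inr (f ≫ g)) := rfl

lemma map_pElem₁ {a : C} (f : a ⟶ d₁) :
    (PSh σ₁ σ₂).map f.op (pElem₁ σ₁ σ₂) = Quot.mk _ (Sum.inl f) := by
  simpa [pElem₁] using PSh_map_inl σ₁ σ₂ f (𝟙 d₁)

lemma map_pElem₂ {a : C} (f : a ⟶ d₂) :
    (PSh σ₁ σ₂).map f.op (pElem₂ σ₁ σ₂) = Quot.mk _ (Sum.inr f) := by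
  simpa [pElem₂] using PSh_map_inr σ₁ σ₂ f (𝟙 d₂)

lemma pComm :
    (PSh σ₁ σ₂).map σ₁.op (pElem₁ σ₁ σ₂) = (PSh σ₁ σ₂).map σ₂.op (pElem₂ σ₁ σ₂) := by
  rw [map_pElem₁, map_pElem₂]
  have h := Quot.sound (PRel.mk (σ₁ := σ₁) (σ₂ := σ₂) (a := op c) (𝟙 c))
  simp only [Category.id_comp] at h
  exact h

/-- Descent: a cocone on the span induces a map from the explicit pushout presheaf. -/
def pDesc (X : Cᵒᵖ ⥤ Type) (y₁ : X.obj (op d₁)) (y₂ : X.obj (op d₂))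
    (hy : X.map σ₁.op y₁ = X.map σ₂.op y₂) : PSh σ₁ σ₂ ⟶ X where
  app a := TypeCat.ofHom (Quot.lift (Sum.elim (fun f => X.map f.op y₁) (fun f => X.map f.op y₂))
    (by
      rintro _ _ ⟨g⟩
      simp only [Sum.elim_inl, Sum.elim_inr, op_comp, FunctorToTypes.map_comp_apply, hy]))
  naturality a b h := by
    ext t
    induction t using Quot.ind with
    | _ s =>
      cases s <;>
        · dsimp [PSh, Quot.map]
          rw [← FunctorToTypes.map_comp_apply]

end ExplicitPushout

/-- Key step: if `z` is non-degenerate and `z = P(φ)(z)` then `φ = 𝟙`. -/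
lemma endo_eq_id (R : ReedyStruct C) (X : Cᵒᵖ ⥤ Type) {e : C} (z : X.obj (op e))
    (hnd : ¬ Degenerate R X z) (φ : e ⟶ e) (hφ : X.map φ.op z = z) : φ = 𝟙 e := by
  obtain ⟨w, g, h, hg, hh, hgh⟩ := R.fact_exists φ
  have hmap : X.map g.op (X.map h.op z) = z := by
    rw [← FunctorToTypes.map_comp_apply, ← op_comp, hgh, hφ]
  have hid : ∃ w' : e = w, g = eqToHom w' := by
    by_contra hcon
    exact hnd ⟨w, g, X.map h.op z, hg, hcon, hmap⟩
  obtain ⟨hw, hgeq⟩ := hid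
  subst hw
  obtain ⟨hw2, hheq⟩ := R.plus_deg_eq h hh rfl
  rw [← hgh, hgeq, hheq]
  simp

/-- Elegance implies the strong pushout property. -/
lemma elegant_to_sp (R : ReedyStruct C) (hEl : Elegant R) : StrongPushoutProp R := by
  intro c d₁ d₂ σ₁ σ₂ hm₁ hm₂
  obtain ⟨⟨e, τ₁, z⟩, ⟨hmt₁, hndz, hz₁⟩, -⟩ := hEl (PSh σ₁ σ₂) d₁ (pElem₁ σ₁ σ₂)
  obtain ⟨⟨e', τ₂, z'⟩, ⟨hmt₂, hndz', hz₂⟩, -⟩ := hEl (PSh σ₁ σ₂) d₂ (pElem₂ σ₁ σ₂)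
  dsimp only at hmt₁ hndz hz₁ hmt₂ hndz' hz₂
  obtain ⟨p₀, -, hu⟩ := hEl (PSh σ₁ σ₂) c ((PSh σ₁ σ₂).map σ₁.op (pElem₁ σ₁ σ₂))
  have pr₁ : R.minus (σ₁ ≫ τ₁) ∧ ¬ Degenerate R (PSh σ₁ σ₂) z ∧
      (PSh σ₁ σ₂).map (σ₁ ≫ τ₁).op z = (PSh σ₁ σ₂).map σ₁.op (pElem₁ σ₁ σ₂) := by
    refine ⟨R.minus_comp _ _ hm₁ hmt₁, hndz, ?_⟩
    rw [op_comp, FunctorToTypes.map_comp_apply, hz₁]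
  have pr₂ : R.minus (σ₂ ≫ τ₂) ∧ ¬ Degenerate R (PSh σ₁ σ₂) z' ∧
      (PSh σ₁ σ₂).map (σ₂ ≫ τ₂).op z' = (PSh σ₁ σ₂).map σ₁.op (pElem₁ σ₁ σ₂) := by
    refine ⟨R.minus_comp _ _ hm₂ hmt₂, hndz', ?_⟩
    rw [op_comp, FunctorToTypes.map_comp_apply, hz₂, pComm]
  have heq : (⟨e, σ₁ ≫ τ₁, z⟩ : Σ d : C, (c ⟶ d) × (PSh σ₁ σ₂).obj (op d)) =
      ⟨e', σ₂ ≫ τ₂, z'⟩ :=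
    (hu _ pr₁).trans (hu _ pr₂).symm
  have he : e = e' := congrArg Sigma.fst heq
  subst he
  have hpair : (σ₁ ≫ τ₁, z) = (σ₂ ≫ τ₂, z') := by
    exact eq_of_heq (Sigma.ext_iff.mp heq).2
  have hsq : σ₁ ≫ τ₁ = σ₂ ≫ τ₂ := congrArg Prod.fst hpair
  have hzz : z = z' := congrArg Prod.snd hpair
  subst hzz
  -- key facts about representatives of z
  have key₁ : ∀ f : e ⟶ d₁, z = Quot.mk _ (Sum.inl f) → f ≫ τ₁ = 𝟙 e := by
    intro f hf
    apply endo_eq_id R (PSh σ₁ σ₂) z hndz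
    rw [op_comp, FunctorToTypes.map_comp_apply, hz₁, map_pElem₁, ← hf]
  have key₂ : ∀ f : e ⟶ d₂, z = Quot.mk _ (Sum.inr f) → f ≫ τ₂ = 𝟙 e := by
    intro f hf
    apply endo_eq_id R (PSh σ₁ σ₂) z hndz'
    rw [op_comp, FunctorToTypes.map_comp_apply, hz₂, map_pElem₂, ← hf]
  refine ⟨e, τ₁, τ₂, hmt₁, hmt₂, hsq, ?_⟩
  have wcomm : yoneda.map σ₁ ≫ yoneda.map τ₁ = yoneda.map σ₂ ≫ yoneda.map τ₂ := by
    rw [← Functor.map_comp, ← Functor.map_comp, hsq]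
  -- data for an arbitrary cocone
  have hys : ∀ s : PushoutCocone (yoneda.map σ₁) (yoneda.map σ₂),
      s.pt.map σ₁.op (s.inl.app (op d₁) (𝟙 d₁)) =
        s.pt.map σ₂.op (s.inr.app (op d₂) (𝟙 d₂)) := by
    intro s
    have h1 := types_congr_hom (NatTrans.congr_app s.condition (op c)) (𝟙 c)
    simp only [NatTrans.comp_app, types_comp_apply] at h1
    have e1 : (yoneda.map σ₁).app (op c) (𝟙 c) = σ₁ := by simp [yoneda]
    have e2 : (yoneda.map σ₂).app (op c) (𝟙 c) = σ₂ := by simp [yoneda]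
    rw [e1, e2] at h1
    rw [← yoneda_app s.inl (op c) σ₁, ← yoneda_app s.inr (op c) σ₂]
    exact h1
  refine IsPushout.of_isColimit (PushoutCocone.IsColimit.mk wcomm
    (fun s => yElt s.pt (((pDesc σ₁ σ₂ s.pt _ _ (hys s)).app (op e)) z)) ?_ ?_ ?_)
  · -- fac₁
    intro s
    apply NatTrans.ext
    funext a; ext f
    show s.pt.map (f ≫ τ₁).op ((pDesc σ₁ σ₂ s.pt _ _ (hys s)).app (op e) z) =
      s.inl.app a f
    have hnat : s.pt.map τ₁.op ((pDesc σ₁ σ₂ s.pt _ _ (hys s)).app (op e) z) =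
        (pDesc σ₁ σ₂ s.pt _ _ (hys s)).app (op d₁) ((PSh σ₁ σ₂).map τ₁.op z) :=
      (FunctorToTypes.naturality (pDesc σ₁ σ₂ s.pt _ _ (hys s)) τ₁.op z).symm
    have e4 : (pDesc σ₁ σ₂ s.pt _ _ (hys s)).app (op d₁) (pElem₁ σ₁ σ₂) =
        s.inl.app (op d₁) (𝟙 d₁) := by
      show s.pt.map (𝟙 d₁).op (s.inl.app (op d₁) (𝟙 d₁)) = s.inl.app (op d₁) (𝟙 d₁)
      simp
    rw [op_comp, FunctorToTypes.map_comp_apply, hnat, hz₁, e4, ← yoneda_app s.inl a f]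
  · -- fac₂
    intro s
    apply NatTrans.ext
    funext a; ext f
    show s.pt.map (f ≫ τ₂).op ((pDesc σ₁ σ₂ s.pt _ _ (hys s)).app (op e) z) =
      s.inr.app a f
    have hnat : s.pt.map τ₂.op ((pDesc σ₁ σ₂ s.pt _ _ (hys s)).app (op e) z) =
        (pDesc σ₁ σ₂ s.pt _ _ (hys s)).app (op d₂) ((PSh σ₁ σ₂).map τ₂.op z) :=
      (FunctorToTypes.naturality (pDesc σ₁ σ₂ s.pt _ _ (hys s)) τ₂.op z).symm
    have e4 : (pDesc σ₁ σ₂ s.pt _ _ (hys s)).app (op d₂) (pElem₂ σ₁ σ₂) =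
        s.inr.app (op d₂) (𝟙 d₂) := by
      show s.pt.map (𝟙 d₂).op (s.inr.app (op d₂) (𝟙 d₂)) = s.inr.app (op d₂) (𝟙 d₂)
      simp
    rw [op_comp, FunctorToTypes.map_comp_apply, hnat, hz₂, e4, ← yoneda_app s.inr a f]
  · -- uniqueness
    intro s m hm₁' hm₂'
    apply NatTrans.ext
    funext a; ext f
    have hkey : m.app (op e) (𝟙 e) = (pDesc σ₁ σ₂ s.pt _ _ (hys s)).app (op e) z := by
      obtain ⟨t, ht⟩ := Quot.exists_rep z
      cases t with
      | inl g =>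
        have hgt : g ≫ τ₁ = 𝟙 e := key₁ g ht.symm
        have h5 : m.app (op e) (𝟙 e) = (yoneda.map τ₁ ≫ m).app (op e) g := by
          show m.app (op e) (𝟙 e) = m.app (op e) (g ≫ τ₁)
          rw [hgt]
        rw [h5, hm₁', yoneda_app s.inl (op e) g, ← ht]
        rfl
      | inr g =>
        have hgt : g ≫ τ₂ = 𝟙 e := key₂ g ht.symm
        have h5 : m.app (op e) (𝟙 e) = (yoneda.map τ₂ ≫ m).app (op e) g := by
          show m.app (op e) (𝟙 e) = m.app (op e) (g ≫ τ₂)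
          rw [hgt]
        rw [h5, hm₂', yoneda_app s.inr (op e) g, ← ht]
        rfl
    show m.app a f = s.pt.map f.op ((pDesc σ₁ σ₂ s.pt _ _ (hys s)).app (op e) z)
    rw [yoneda_app m a f, hkey]

/-- The strong pushout property implies uniqueness of non-degenerate decompositions. -/
lemma sp_unique (R : ReedyStruct C) (hSP : StrongPushoutProp R)
    (X : Cᵒᵖ ⥤ Type) {c : C} (x : X.obj (op c))
    (p q : Σ d : C, (c ⟶ d) × X.obj (op d))
    (hp : R.minus p.2.1 ∧ ¬ Degenerate R X p.2.2 ∧ X.map p.2.1.op p.2.2 = x)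
    (hq : R.minus q.2.1 ∧ ¬ Degenerate R X q.2.2 ∧ X.map q.2.1.op q.2.2 = x) :
    p = q := by
  obtain ⟨d₁, σ₁, y₁⟩ := p
  obtain ⟨d₂, σ₂, y₂⟩ := q
  obtain ⟨hm₁, hnd₁, hx₁⟩ := hp
  obtain ⟨hm₂, hnd₂, hx₂⟩ := hq
  dsimp only at hm₁ hnd₁ hx₁ hm₂ hnd₂ hx₂
  obtain ⟨e, τ₁, τ₂, hmt₁, hmt₂, hcomm, hpo⟩ := hSP σ₁ σ₂ hm₁ hm₂
  -- the commuting square evaluated in X gives a common lift z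
  have hcond : yoneda.map σ₁ ≫ yElt X y₁ = yoneda.map σ₂ ≫ yElt X y₂ := by
    apply NatTrans.ext
    funext a; ext f
    show X.map (f ≫ σ₁).op y₁ = X.map (f ≫ σ₂).op y₂
    rw [op_comp, op_comp, FunctorToTypes.map_comp_apply, FunctorToTypes.map_comp_apply,
      hx₁, hx₂]
  set D := hpo.desc (yElt X y₁) (yElt X y₂) hcond with hD
  set z := D.app (op e) (𝟙 e) with hzdef
  have hz₁ : X.map τ₁.op z = y₁ := by
    have hnat : X.map τ₁.op (D.app (op e) (𝟙 e)) =
        D.app (op d₁) ((yoneda.obj e).map τ₁.op (𝟙 e)) :=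
      (FunctorToTypes.naturality D τ₁.op (𝟙 e)).symm
    have e1 : (yoneda.obj e).map τ₁.op (𝟙 e) = τ₁ := by simp [yoneda]
    have e2 : D.app (op d₁) τ₁ = (yoneda.map τ₁ ≫ D).app (op d₁) (𝟙 d₁) := by
      simp [yoneda]
    rw [hzdef, hnat, e1, e2, hpo.inl_desc]
    simp [yElt]
  have hz₂ : X.map τ₂.op z = y₂ := by
    have hnat : X.map τ₂.op (D.app (op e) (𝟙 e)) =
        D.app (op d₂) ((yoneda.obj e).map τ₂.op (𝟙 e)) :=
      (FunctorToTypes.naturality D τ₂.op (𝟙 e)).symm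
    have e1 : (yoneda.obj e).map τ₂.op (𝟙 e) = τ₂ := by simp [yoneda]
    have e2 : D.app (op d₂) τ₂ = (yoneda.map τ₂ ≫ D).app (op d₂) (𝟙 d₂) := by
      simp [yoneda]
    rw [hzdef, hnat, e1, e2, hpo.inr_desc]
    simp [yElt]
  -- non-degeneracy forces τ₁ and τ₂ to be identities
  have ht₁ : ∃ w : d₁ = e, τ₁ = eqToHom w := by
    by_contra hcon
    exact hnd₁ ⟨e, τ₁, z, hmt₁, hcon, hz₁⟩
  have ht₂ : ∃ w : d₂ = e, τ₂ = eqToHom w := by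
    by_contra hcon
    exact hnd₂ ⟨e, τ₂, z, hmt₂, hcon, hz₂⟩
  obtain ⟨w₁, hw₁⟩ := ht₁
  subst w₁
  obtain ⟨w₂, hw₂⟩ := ht₂
  subst w₂
  rw [hw₁] at hcomm hz₁
  rw [hw₂] at hcomm hz₂
  simp only [eqToHom_refl, Category.comp_id] at hcomm
  simp only [eqToHom_refl, op_id, FunctorToTypes.map_id_apply] at hz₁ hz₂
  rw [hcomm, ← hz₁, ← hz₂]

end Aux

/-- A Reedy category is elegant if and only if it satisfies property (SP). -/
theorem elegant_iff_strongPushout (R : ReedyStruct C) :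
    Elegant R ↔ StrongPushoutProp R := by
  constructor
  · exact elegant_to_sp R
  · intro hSP X c x
    obtain ⟨p, hp⟩ := exists_nondeg R X (R.deg c + 1) c (Nat.lt_succ_self _) x
    exact ⟨p, hp, fun q hq => sp_unique R hSP X x q p hq hp⟩
end

section
/- In an elegant Reedy category, for every σ: c → d in C⁻ the map Fσ: Fc → Fd is a split epimorphism of presheaves; moreover a morphism α of C lies in C⁻ if and only if Fα is an epimorphism in Psh(C). -/
open CategoryTheory CategoryTheory.Limits Opposite

universe v u

variable {C : Type} [SmallCategory C]

namespace ElegantSplitEpiAux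

variable {c d : C}

/-- The generating relation for the pushout of `yoneda.map σ` along itself. -/
def pRel (σ : c ⟶ d) (e : Cᵒᵖ) (a b : (unop e ⟶ d) ⊕ (unop e ⟶ d)) : Prop :=
  ∃ τ : unop e ⟶ c, (a = Sum.inl (τ ≫ σ) ∧ b = Sum.inr (τ ≫ σ)) ∨
    (a = Sum.inr (τ ≫ σ) ∧ b = Sum.inl (τ ≫ σ))

/-- The pushout presheaf `Fd ⊔_{Fc} Fd`. -/
def P (σ : c ⟶ d) : Cᵒᵖ ⥤ Type where
  obj e := Quot (pRel σ e)
  map {e e'} h := ↾(Quot.lift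
    (fun a => Quot.mk _ (Sum.map (fun g => h.unop ≫ g) (fun g => h.unop ≫ g) a))
    (by
      rintro a b ⟨τ, ⟨rfl, rfl⟩ | ⟨rfl, rfl⟩⟩
      · exact Quot.sound ⟨h.unop ≫ τ, Or.inl ⟨by simp, by simp⟩⟩
      · exact Quot.sound ⟨h.unop ≫ τ, Or.inr ⟨by simp, by simp⟩⟩))
  map_id e := by
    ext x
    induction x using Quot.ind with
    | _ a => cases a <;> simp
  map_comp {e e' e''} h h' := by
    ext x
    induction x using Quot.ind with
    | _ a => cases a <;> simp

/-- The swap automorphism of the symmetric pushout presheaf. -/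
def sw (σ : c ⟶ d) : P σ ⟶ P σ where
  app e := ↾(Quot.lift (fun a : (unop e ⟶ d) ⊕ (unop e ⟶ d) => Quot.mk _ a.swap)
    (by
      rintro a b ⟨τ, ⟨rfl, rfl⟩ | ⟨rfl, rfl⟩⟩
      · exact Quot.sound ⟨τ, Or.inr ⟨rfl, rfl⟩⟩
      · exact Quot.sound ⟨τ, Or.inl ⟨rfl, rfl⟩⟩))
  naturality e e' h := by
    ext x
    induction x using Quot.ind with
    | _ a => cases a <;> rfl

lemma sw_sw (σ : c ⟶ d) (e : Cᵒᵖ) (x : (P σ).obj e) :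
    (sw σ).app e ((sw σ).app e x) = x := by
  induction x using Quot.ind with
  | _ a => cases a <;> rfl

lemma sw_natural (σ : c ⟶ d) {e e' : Cᵒᵖ} (h : e ⟶ e') (x : (P σ).obj e) :
    (sw σ).app e' ((P σ).map h x) = (P σ).map h ((sw σ).app e x) :=
  FunctorToTypes.naturality (sw σ) h x

lemma extract (σ : c ⟶ d)
    (h : Quot.mk (pRel σ (op d)) (Sum.inl (𝟙 d)) = Quot.mk (pRel σ (op d)) (Sum.inr (𝟙 d))) :
    ∃ τ : d ⟶ c, τ ≫ σ = 𝟙 d := by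
  have h' := Quot.eq.mp h
  have key : ∀ a b, Relation.EqvGen (pRel σ (op d)) a b →
      a = b ∨ (Sum.elim id id a = Sum.elim id id b ∧
        ∃ τ : d ⟶ c, Sum.elim id id a = τ ≫ σ) := by
    intro a b hab
    induction hab with
    | rel a b hr =>
      obtain ⟨τ, ⟨rfl, rfl⟩ | ⟨rfl, rfl⟩⟩ := hr
      · exact Or.inr ⟨rfl, τ, rfl⟩
      · exact Or.inr ⟨rfl, τ, rfl⟩
    | refl a => exact Or.inl rfl
    | symm a b _ ih =>
      rcases ih with rfl | ⟨hv, τ, hτ⟩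
      · exact Or.inl rfl
      · exact Or.inr ⟨hv.symm, τ, hv ▸ hτ⟩
    | trans a b e _ _ ih1 ih2 =>
      rcases ih1 with rfl | ⟨hv1, τ1, hτ1⟩
      · exact ih2
      · rcases ih2 with rfl | ⟨hv2, _, _⟩
        · exact Or.inr ⟨hv1, τ1, hτ1⟩
        · exact Or.inr ⟨hv1.trans hv2, τ1, hτ1⟩
  rcases key _ _ h' with heq | ⟨hv, τ, hτ⟩
  · exact absurd heq (by simp)
  · exact ⟨τ, hτ.symm⟩

/-- The key lemma: in an elegant Reedy category every map in `C⁻` has a section. -/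
lemma minus_section (R : ReedyStruct C) (hR : Elegant R) (σ : c ⟶ d) (hσ : R.minus σ) :
    ∃ τ : d ⟶ c, τ ≫ σ = 𝟙 d := by
  obtain ⟨⟨f, ν, y⟩, ⟨hν, hy, hxy⟩, -⟩ := hR (P σ) d (Quot.mk _ (Sum.inl (𝟙 d)))
  dsimp only at hν hy hxy
  -- swap preserves non-degeneracy
  have hswy : ¬ Degenerate R (P σ) ((sw σ).app (op f) y) := by
    rintro ⟨d', τ', z, hmin, hnid, hz⟩
    refine hy ⟨d', τ', (sw σ).app (op d') z, hmin, hnid, ?_⟩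
    rw [← sw_natural, hz, sw_sw]
  have hq12 : (P σ).map σ.op (Quot.mk _ (Sum.inr (𝟙 d)))
      = (P σ).map σ.op (Quot.mk _ (Sum.inl (𝟙 d))) := by
    show Quot.mk (pRel σ (op c)) (Sum.inr (σ ≫ 𝟙 d)) = Quot.mk _ (Sum.inl (σ ≫ 𝟙 d))
    exact Quot.sound ⟨𝟙 c, Or.inr ⟨by simp, by simp⟩⟩
  have hd1 : (P σ).map (σ ≫ ν).op y = (P σ).map σ.op (Quot.mk _ (Sum.inl (𝟙 d))) := by
    rw [op_comp, Functor.map_comp]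
    exact congrArg ((P σ).map σ.op) hxy
  have hd2 : (P σ).map (σ ≫ ν).op ((sw σ).app (op f) y)
      = (P σ).map σ.op (Quot.mk _ (Sum.inl (𝟙 d))) := by
    rw [op_comp, Functor.map_comp]
    show (P σ).map σ.op ((P σ).map ν.op ((sw σ).app (op f) y)) = _
    rw [← sw_natural, hxy]
    show (P σ).map σ.op (Quot.mk _ (Sum.inr (𝟙 d))) = _
    exact hq12
  obtain ⟨p, -, hup⟩ := hR (P σ) c ((P σ).map σ.op (Quot.mk _ (Sum.inl (𝟙 d))))
  have e1 := hup ⟨f, σ ≫ ν, y⟩ ⟨R.minus_comp σ ν hσ hν, hy, hd1⟩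
  have e2 := hup ⟨f, σ ≫ ν, (sw σ).app (op f) y⟩
    ⟨R.minus_comp σ ν hσ hν, hswy, hd2⟩
  have e3 : (⟨f, σ ≫ ν, y⟩ : Σ d' : C, (c ⟶ d') × (P σ).obj (op d'))
      = ⟨f, σ ≫ ν, (sw σ).app (op f) y⟩ := e1.trans e2.symm
  have e4 : ((σ ≫ ν, y) : (c ⟶ f) × (P σ).obj (op f)) = (σ ≫ ν, (sw σ).app (op f) y) :=
    eq_of_heq (Sigma.ext_iff.mp e3).2
  have e5 : y = (sw σ).app (op f) y := congrArg Prod.snd e4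
  have e6 : Quot.mk (pRel σ (op d)) (Sum.inl (𝟙 d)) = Quot.mk (pRel σ (op d)) (Sum.inr (𝟙 d)) := by
    calc (show (P σ).obj (op d) from Quot.mk (pRel σ (op d)) (Sum.inl (𝟙 d))) = (P σ).map ν.op y := hxy.symm
      _ = (P σ).map ν.op ((sw σ).app (op f) y) := by rw [← e5]
      _ = (sw σ).app (op d) ((P σ).map ν.op y) := (sw_natural σ ν.op y).symm
      _ = (sw σ).app (op d) (Quot.mk (pRel σ (op d)) (Sum.inl (𝟙 d))) := by rw [hxy]
      _ = (show (P σ).obj (op d) from Quot.mk (pRel σ (op d)) (Sum.inr (𝟙 d))) := rfl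
  exact extract σ e6

lemma plus_eqToHom (R : ReedyStruct C) {a b : C} (w : a = b) : R.plus (eqToHom w) := by
  subst w; simpa using R.plus_id a

end ElegantSplitEpiAux

open ElegantSplitEpiAux in
/-- In an elegant Reedy category, for every `σ : c ⟶ d` in `C⁻` the map `Fσ : Fc ⟶ Fd` is
a split epimorphism of presheaves; moreover a morphism `α` lies in `C⁻` if and only if
`Fα` is an epimorphism in `Psh(C)`. -/
theorem elegant_minus_split_epi (R : ReedyStruct C) (hR : Elegant R) :
    (∀ {c d : C} (σ : c ⟶ d), R.minus σ → IsSplitEpi (yoneda.map σ)) ∧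
    (∀ {c d : C} (α : c ⟶ d), R.minus α ↔ Epi (yoneda.map α)) := by
  have split : ∀ {c d : C} (σ : c ⟶ d), R.minus σ → IsSplitEpi (yoneda.map σ) := by
    intro c d σ hσ
    obtain ⟨τ, hτ⟩ := minus_section R hR σ hσ
    exact ⟨⟨⟨yoneda.map τ, by rw [← yoneda.map_comp, hτ, yoneda.map_id]⟩⟩⟩
  refine ⟨split, ?_⟩
  intro c d α
  constructor
  · intro hα
    have := split α hα
    exact IsSplitEpi.epi _
  · intro hepi
    have happ : Epi ((yoneda.map α).app (op d)) :=
      (NatTrans.epi_iff_epi_app (yoneda.map α)).mp hepi (op d)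
    obtain ⟨τ, hτ⟩ := (epi_iff_surjective _).mp happ (𝟙 d)
    have hτα : τ ≫ α = 𝟙 d := hτ
    obtain ⟨e, g, h, hg, hh, hgh⟩ := R.fact_exists α
    obtain ⟨m, a1, a2, ha1, ha2, ha⟩ := R.fact_exists (τ ≫ g)
    have hcomp : a1 ≫ (a2 ≫ h) = 𝟙 d ≫ 𝟙 d := by
      rw [← Category.assoc, ha, Category.assoc, hgh, hτα, Category.id_comp]
    obtain ⟨w, hw1, hw2⟩ := R.fact_unique a1 (a2 ≫ h) (𝟙 d) (𝟙 d)
      ha1 (R.plus_comp a2 h ha2 hh) (R.minus_id d) (R.plus_id d) hcomp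
    have h2 : a2 ≫ h = eqToHom w := by rw [← hw2, Category.comp_id]
    have hsplus : R.plus ((eqToHom w.symm ≫ a2 : d ⟶ e)) :=
      R.plus_comp _ _ (plus_eqToHom R w.symm) ha2
    have hdege : R.deg e = R.deg d :=
      le_antisymm (R.plus_deg h hh) (R.plus_deg _ hsplus)
    obtain ⟨w', hw'⟩ := R.plus_deg_eq h hh hdege
    subst w'
    rw [hw', eqToHom_refl, Category.comp_id] at hgh
    rwa [← hgh]
end

section
/- If C is an elegant Reedy category and f: X → Y is a monomorphism of set-valued presheaves on C, then for every object c, X_nd(c) = f⁻¹(Y_nd(c)) as subsets of X(c); in particular f preserves and reflects non-degeneracy of points. -/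
open CategoryTheory CategoryTheory.Limits Opposite

universe v u

variable {C : Type} [SmallCategory C]

/-- A map with a right inverse that lies in `minus` must be an identity (up to `eqToHom`). -/
lemma minus_rinv_eq (R : ReedyStruct C) {d m : C} (μ : d ⟶ m) (z : m ⟶ d)
    (hμ : R.minus μ) (hz : μ ≫ z = 𝟙 d) : ∃ w : d = m, μ = eqToHom w := by
  obtain ⟨k, g, h, hg, hh, hgh⟩ := R.fact_exists z
  have h1 : (μ ≫ g) ≫ h = 𝟙 d ≫ 𝟙 d := by
    rw [Category.assoc, hgh, hz, Category.id_comp]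
  obtain ⟨w, hw1, _⟩ := R.fact_unique (μ ≫ g) h (𝟙 d) (𝟙 d)
    (R.minus_comp _ _ hμ hg) hh (R.minus_id d) (R.plus_id d) h1
  have hν : R.minus (g ≫ eqToHom w) :=
    R.minus_comp _ _ hg (by cases w; exact R.minus_id _)
  have hμν : μ ≫ (g ≫ eqToHom w) = 𝟙 d := by rw [← Category.assoc]; exact hw1
  have hdeg : R.deg d = R.deg m :=
    le_antisymm (R.minus_deg _ hν) (R.minus_deg μ hμ)
  exact R.minus_deg_eq μ hμ hdeg

/-- The relation used to glue two copies of the representable presheaf on `d` along the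
image of `σ : c ⟶ d`. -/
def Wrel {c d : C} (σ : c ⟶ d) (a : Cᵒᵖ) :
    ((unop a ⟶ d) × Bool) → ((unop a ⟶ d) × Bool) → Prop :=
  fun p q => p.1 = q.1 ∧ (p.2 = q.2 ∨ ∃ h : unop a ⟶ c, h ≫ σ = p.1)

/-- Two copies of the representable presheaf of `d`, glued along the image of `σ`. -/
def Wfun {c d : C} (σ : c ⟶ d) : Cᵒᵖ ⥤ Type where
  obj a := Quot (Wrel σ a)
  map {a b} φ := TypeCat.ofHom (Quot.map (fun p : (unop a ⟶ d) × Bool => (φ.unop ≫ p.1, p.2)) (by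
    rintro ⟨p1, p2⟩ ⟨q1, q2⟩ ⟨h1, h2⟩
    dsimp only at h1 h2 ⊢
    subst h1
    refine ⟨rfl, ?_⟩
    rcases h2 with h2 | ⟨h, hh⟩
    · exact Or.inl h2
    · exact Or.inr ⟨φ.unop ≫ h, by rw [Category.assoc, hh]⟩))
  map_id a := ConcreteCategory.hom_ext _ _ (fun q => by induction q using Quot.ind with | mk p => cases p; exact congrArg (Quot.mk _) (by simp))
  map_comp {a b e} φ ψ :=
    ConcreteCategory.hom_ext _ _ (fun q => by induction q using Quot.ind with | mk p => cases p; exact congrArg (Quot.mk _) (by simp))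

/-- First projection out of `Wfun` (well-defined since the gluing respects it). -/
def Wfst {c d : C} (σ : c ⟶ d) (a : Cᵒᵖ) : Quot (Wrel σ a) → (unop a ⟶ d) :=
  Quot.lift (fun p => p.1) (fun _ _ h => h.1)

/-- `Wfst` commutes with the functorial action. -/
lemma Wfst_map {c d : C} (σ : c ⟶ d) {a b : Cᵒᵖ} (φ : a ⟶ b) :
    ∀ z : (Wfun σ).obj a, Wfst σ b ((Wfun σ).map φ z) = φ.unop ≫ Wfst σ a z :=
  Quot.ind fun _ => rfl

/-- In an elegant Reedy category, every map of `C⁻` is a split epimorphism. -/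
lemma minus_split (R : ReedyStruct C) (hR : Elegant R) {c d : C} (σ : c ⟶ d)
    (hσ : R.minus σ) : ∃ s : d ⟶ c, s ≫ σ = 𝟙 d := by
  let W := Wfun σ
  let u : Bool → W.obj (op d) := fun i => Quot.mk _ (𝟙 d, i)
  have hund : ∀ i, ¬ Degenerate R W (u i) := by
    rintro i ⟨m, μ, z, hμ, hne, hz⟩
    have h1 : μ ≫ Wfst σ (op m) z = 𝟙 d := by
      have h0 := congrArg (Wfst σ (op d)) hz
      rwa [Wfst_map] at h0
    obtain ⟨w, hw⟩ := minus_rinv_eq R μ (Wfst σ (op m) z) hμ h1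
    exact hne ⟨w, hw⟩
  let s₀ : W.obj (op c) := Quot.mk _ (σ, true)
  have hmap : ∀ i, W.map σ.op (u i) = s₀ := by
    intro i
    refine Quot.sound ⟨by simp, Or.inr ⟨𝟙 c, ?_⟩⟩
    simp
  have key : ∀ i, R.minus ((⟨d, σ, u i⟩ : Σ d' : C, (c ⟶ d') × W.obj (op d')).2.1) ∧
      ¬ Degenerate R W (⟨d, σ, u i⟩ : Σ d' : C, (c ⟶ d') × W.obj (op d')).2.2 ∧
      W.map (⟨d, σ, u i⟩ : Σ d' : C, (c ⟶ d') × W.obj (op d')).2.1.op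
        (⟨d, σ, u i⟩ : Σ d' : C, (c ⟶ d') × W.obj (op d')).2.2 = s₀ :=
    fun i => ⟨hσ, hund i, hmap i⟩
  have huniq := (hR W c s₀).unique (key true) (key false)
  have h2 : (σ, u true) = (σ, u false) := eq_of_heq ((Sigma.mk.inj_iff.mp huniq).2)
  have h3 : u true = u false := (Prod.mk.injEq _ _ _ _).mp h2 |>.2
  -- extract a factorization of the identity from the gluing
  have hext := congrArg (Quot.lift
      (fun p : (d ⟶ d) × Bool => p.2 = true ∨ ∃ h : d ⟶ c, h ≫ σ = p.1)
      (by
        rintro ⟨p1, p2⟩ ⟨q1, q2⟩ ⟨h1, h2⟩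
        dsimp only at h1 h2 ⊢
        subst h1
        rcases h2 with h2 | hfac
        · rw [h2]
        · exact propext ⟨fun _ => Or.inr hfac, fun _ => Or.inr hfac⟩)) h3
  have h' : true = true ∨ ∃ h : d ⟶ c, h ≫ σ = 𝟙 d := Or.inl rfl
  have h'' : false = true ∨ ∃ h : d ⟶ c, h ≫ σ = 𝟙 d := Eq.mp hext h'
  rcases h'' with h5 | h5
  · exact absurd h5 (by simp)
  · exact h5

/-- If `C` is an elegant Reedy category and `f : X ⟶ Y` a monomorphism of set-valued
presheaves on `C`, then `f` preserves and reflects non-degeneracy of points: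
`X_nd(c) = f⁻¹(Y_nd(c))`. -/
theorem elegant_mono_nondegenerate (R : ReedyStruct C) (hR : Elegant R)
    {X Y : Cᵒᵖ ⥤ Type} (f : X ⟶ Y) (hf : Mono f) (c : C) (x : X.obj (op c)) :
    ¬ Degenerate R X x ↔ ¬ Degenerate R Y (f.app (op c) x) := by
  have hinj : ∀ a : Cᵒᵖ, Function.Injective (f.app a) := by
    intro a
    have : Mono (f.app a) := (NatTrans.mono_iff_mono_app f).mp hf a
    exact (mono_iff_injective _).mp this
  constructor
  · -- f reflects degeneracy: Deg Y (f x) → Deg X x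
    intro hx hY
    apply hx
    obtain ⟨m, μ, z, hμ, hne, hz⟩ := hY
    obtain ⟨s, hs⟩ := minus_split R hR μ hμ
    refine ⟨m, μ, X.map s.op x, hμ, hne, ?_⟩
    apply hinj (op c)
    have hnat1 : f.app (op c) (X.map μ.op (X.map s.op x)) =
        Y.map μ.op (f.app (op m) (X.map s.op x)) := NatTrans.naturality_apply f μ.op _
    have hnat2 : f.app (op m) (X.map s.op x) = Y.map s.op (f.app (op c) x) :=
      NatTrans.naturality_apply f s.op x
    have hzz : Y.map s.op (f.app (op c) x) = z := by
      rw [← hz, ← FunctorToTypes.map_comp_apply, ← op_comp, hs, op_id,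
        FunctorToTypes.map_id_apply]
    rw [hnat1, hnat2, hzz, hz]
  · -- f preserves degeneracy (contrapositive)
    intro hY hx
    apply hY
    obtain ⟨m, μ, y, hμ, hne, hy⟩ := hx
    exact ⟨m, μ, f.app (op m) y, hμ, hne, by
      rw [← FunctorToTypes.naturality, hy]⟩
end
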